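/- Let ℙ⁻ be a Markov measure on Σ_k with transition matrix Q and positive stationary vector p̄. Let W = [ξ_0…ξ_{N-1}] be a cylinder with ℙ⁻(W) > 0 and suppose ρ := inf_j q_{j ξ_0} q_{ξ_0 ξ_1} ⋯ q_{ξ_{N-2} ξ_{N-1}} > 0. Set ρ_0 = min{ρ, ℙ⁻(W)} and λ_0 = 1 − ρ_0 ∈ (0,1). Then for every ℓ ≥ 1, ℙ⁻(Σ_ℓ^W) ≤ λ_0^ℓ, where Σ_ℓ^W = {ω : σ^{iN}(ω) ∉ W for all 0 ≤ i ≤ ℓ−1}. -/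

import Mathlib

open MeasureTheory

/-- `chainW Q c [d₀,…,d_n] = Q c d₀ * Q d₀ d₁ * ⋯`. -/
def chainW {k : ℕ} (Q : Matrix (Fin k) (Fin k) ℝ) : Fin k → List (Fin k) → ℝ
  | _, [] => 1
  | c, d :: t => Q c d * chainW Q d t

/-- The Markov weight of a cylinder word. -/
def cylW {k : ℕ} (p : Fin k → ℝ) (Q : Matrix (Fin k) (Fin k) ℝ) : List (Fin k) → ℝ
  | [] => 1
  | c :: t => p c * chainW Q c t

/-- The cylinder of a finite word. -/
def cylL {k : ℕ} (w : List (Fin k)) : Set (ℕ → Fin k) :=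
  {ω | ∀ (i : ℕ) (h : i < w.length), ω i = w.get ⟨i, h⟩}

/-- The shift map on `Σ_k`. -/
def shift {k : ℕ} (ω : ℕ → Fin k) : ℕ → Fin k := fun n => ω (n + 1)

namespace Stmt7
variable {k : ℕ}

lemma shift_iter (m : ℕ) (ω : ℕ → Fin k) (n : ℕ) : (shift^[m] ω) n = ω (n + m) := by
  induction m generalizing ω n with
  | zero => rfl
  | succ m ih =>
    rw [Function.iterate_succ_apply, ih]
    show ω (n + m + 1) = _
    congr 1

lemma mem_cylL {w : List (Fin k)} {ω : ℕ → Fin k} :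
    ω ∈ cylL w ↔ ∀ i : Fin w.length, ω i = w.get i := by
  exact ⟨fun h i => h i i.2, fun h i hi => h ⟨i, hi⟩⟩

lemma mem_cylL_ofFn {n : ℕ} {w : Fin n → Fin k} {ω : ℕ → Fin k} :
    ω ∈ cylL (List.ofFn w) ↔ ∀ i : Fin n, ω i = w i := by
  rw [mem_cylL]
  constructor
  · intro h i
    have := h (Fin.cast (List.length_ofFn : (List.ofFn w).length = n).symm i)
    simpa using this
  · intro h i
    have := h (Fin.cast (List.length_ofFn : (List.ofFn w).length = n) i)
    simpa [Fin.cast] using this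

lemma cylL_append (u v : List (Fin k)) :
    cylL (u ++ v) = cylL u ∩ {ω | shift^[u.length] ω ∈ cylL v} := by
  ext ω
  simp only [Set.mem_inter_iff, Set.mem_setOf_eq]
  constructor
  · intro h
    refine ⟨fun i hi => ?_, fun j hj => ?_⟩
    · have := h i (by simp; omega)
      simpa [List.getElem_append_left hi] using this
    · have hlt : j + u.length < (u ++ v).length := by simp; omega
      have := h (j + u.length) hlt
      rw [shift_iter]
      simp only [List.get_eq_getElem] at this ⊢
      rw [this, List.getElem_append_right (by omega)]
      congr 1; omega
  · rintro ⟨h1, h2⟩ i hi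
    simp only [List.length_append] at hi
    by_cases hc : i < u.length
    · simpa [List.getElem_append_left hc] using h1 i hc
    · have hj : i - u.length < v.length := by omega
      have := h2 (i - u.length) hj
      rw [shift_iter] at this
      simp only [List.get_eq_getElem] at this ⊢
      rw [List.getElem_append_right (by omega)]
      rw [← this]; congr 1; omega

lemma chainW_nonneg {Q : Matrix (Fin k) (Fin k) ℝ} (hQ0 : ∀ i j, 0 ≤ Q i j)
    (c : Fin k) (t : List (Fin k)) : 0 ≤ chainW Q c t := by
  induction t generalizing c with
  | nil => norm_num [chainW]
  | cons d t ih => exact mul_nonneg (hQ0 c d) (ih d)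

lemma cylW_nonneg {Q : Matrix (Fin k) (Fin k) ℝ} {p : Fin k → ℝ}
    (hQ0 : ∀ i j, 0 ≤ Q i j) (hp : ∀ i, 0 < p i)
    (w : List (Fin k)) : 0 ≤ cylW p Q w := by
  cases w with
  | nil => norm_num [cylW]
  | cons c t => exact mul_nonneg (hp c).le (chainW_nonneg hQ0 c t)

lemma chainW_append (Q : Matrix (Fin k) (Fin k) ℝ) (c : Fin k) (t v : List (Fin k)) :
    chainW Q c (t ++ v) = chainW Q c t * chainW Q ((c :: t).getLast (by simp)) v := by
  induction t generalizing c with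
  | nil => simp [chainW, List.getLast]
  | cons d t ih =>
    show Q c d * chainW Q d (t ++ v)
        = Q c d * chainW Q d t * chainW Q ((c :: d :: t).getLast (by simp)) v
    rw [ih d,
      show ((c :: d :: t).getLast (by simp) : Fin k) = (d :: t).getLast (by simp) from
        List.getLast_cons _]
    ring

lemma sum_chainW {Q : Matrix (Fin k) (Fin k) ℝ} (hQ1 : ∀ i, ∑ j, Q i j = 1) :
    ∀ (n : ℕ) (c : Fin k), ∑ v : Fin n → Fin k, chainW Q c (List.ofFn v) = 1 := by
  intro n
  induction n with
  | zero => intro c; simp [chainW]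
  | succ n ih =>
    intro c
    rw [← (Fin.consEquiv (fun _ : Fin (n+1) => Fin k)).sum_comp]
    rw [Fintype.sum_prod_type]
    have : ∀ (d : Fin k) (w : Fin n → Fin k),
        chainW Q c (List.ofFn ((Fin.consEquiv (fun _ : Fin (n+1) => Fin k)) (d, w)))
          = Q c d * chainW Q d (List.ofFn w) := by
      intro d w
      simp [Fin.consEquiv, List.ofFn_succ, chainW]
    simp only [this]
    rw [show ∑ d : Fin k, ∑ w : Fin n → Fin k, Q c d * chainW Q d (List.ofFn w)
        = ∑ d : Fin k, Q c d * ∑ w : Fin n → Fin k, chainW Q d (List.ofFn w) by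
      simp [Finset.mul_sum]]
    simp only [ih]
    simpa using hQ1 c

def word {k : ℕ} (N : ℕ) : {ℓ : ℕ} → (Fin ℓ → Fin N → Fin k) → List (Fin k) :=
  fun b => (List.ofFn fun i => List.ofFn (b i)).flatten

lemma word_zero (N : ℕ) (b : Fin 0 → Fin N → Fin k) : word N b = [] := by
  simp [word]

lemma word_cons {N ℓ : ℕ} (v : Fin N → Fin k) (b : Fin ℓ → Fin N → Fin k) :
    word N (Fin.cons v b) = List.ofFn v ++ word N b := by
  simp [word, List.ofFn_succ]

lemma word_snoc {N ℓ : ℕ} (b : Fin ℓ → Fin N → Fin k) (v : Fin N → Fin k) :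
    word N (Fin.snoc b v) = word N b ++ List.ofFn v := by
  simp only [word, List.ofFn_succ']
  rw [List.concat_eq_append, List.flatten_append]
  simp

lemma word_length {N ℓ : ℕ} (b : Fin ℓ → Fin N → Fin k) :
    (word N b).length = ℓ * N := by
  simp [word, List.length_flatten, List.map_ofFn, Function.comp_def, mul_comm]

lemma mem_cylL_word {N ℓ : ℕ} (b : Fin ℓ → Fin N → Fin k) (ω : ℕ → Fin k) :
    ω ∈ cylL (word N b) ↔ ∀ (i : Fin ℓ) (j : Fin N), ω (i * N + j) = b i j := by
  induction ℓ generalizing ω with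
  | zero =>
    simp only [word_zero]
    constructor
    · intro _ i; exact i.elim0
    · intro _ i hi; simp at hi
  | succ ℓ ih =>
    rw [← Fin.cons_self_tail b, word_cons, cylL_append, Set.mem_inter_iff]
    rw [Set.mem_setOf_eq, List.length_ofFn, ih, mem_cylL_ofFn]
    constructor
    · rintro ⟨h0, hs⟩ i j
      refine Fin.cases ?_ (fun i' => ?_) i
      · simpa using h0 j
      · have := hs i' j
        rw [shift_iter] at this
        rw [Fin.cons_succ]
        rw [← this]
        congr 1
        simp [Fin.val_succ]
        ring
    · intro h
      constructor
      · intro j; simpa using h 0 j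
      · intro i j
        rw [shift_iter]
        have := h i.succ j
        rw [Fin.cons_succ] at this
        rw [← this]
        congr 1
        simp [Fin.val_succ]
        ring

lemma sum_cylW {Q : Matrix (Fin k) (Fin k) ℝ} {p : Fin k → ℝ}
    (hQ1 : ∀ i, ∑ j, Q i j = 1) (hpsum : ∑ i, p i = 1) {L : ℕ} (hL : L ≠ 0) :
    ∑ v : Fin L → Fin k, cylW p Q (List.ofFn v) = 1 := by
  obtain ⟨m, rfl⟩ := Nat.exists_eq_succ_of_ne_zero hL
  rw [← (Fin.consEquiv (fun _ : Fin (m+1) => Fin k)).sum_comp, Fintype.sum_prod_type]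
  have : ∀ (d : Fin k) (w : Fin m → Fin k),
      cylW p Q (List.ofFn ((Fin.consEquiv (fun _ : Fin (m+1) => Fin k)) (d, w)))
        = p d * chainW Q d (List.ofFn w) := by
    intro d w
    simp [Fin.consEquiv, List.ofFn_succ, cylW]
  simp only [this]
  rw [show ∑ d : Fin k, ∑ w : Fin m → Fin k, p d * chainW Q d (List.ofFn w)
      = ∑ d : Fin k, p d * ∑ w : Fin m → Fin k, chainW Q d (List.ofFn w) by
    simp [Finset.mul_sum]]
  simp only [sum_chainW hQ1, mul_one, hpsum]

lemma cylW_append {Q : Matrix (Fin k) (Fin k) ℝ} {p : Fin k → ℝ}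
    {u : List (Fin k)} (h : u ≠ []) (w : List (Fin k)) :
    cylW p Q (u ++ w) = cylW p Q u * chainW Q (u.getLast h) w := by
  cases u with
  | nil => exact absurd rfl h
  | cons c t =>
    show p c * chainW Q c (t ++ w) = p c * chainW Q c t * chainW Q _ w
    rw [chainW_append, mul_assoc]

lemma sum_cylW_append {Q : Matrix (Fin k) (Fin k) ℝ} {p : Fin k → ℝ}
    (hQ1 : ∀ i, ∑ j, Q i j = 1) (hpsum : ∑ i, p i = 1) {L : ℕ} (hL : L ≠ 0)
    (u : List (Fin k)) :
    ∑ v : Fin L → Fin k, cylW p Q (u ++ List.ofFn v) = cylW p Q u := by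
  rcases eq_or_ne u [] with rfl | hu
  · simpa [cylW] using sum_cylW hQ1 hpsum hL
  · simp only [cylW_append hu, ← Finset.mul_sum]
    have : ∑ v : Fin L → Fin k, chainW Q (u.getLast hu) (List.ofFn v) = 1 := by
      obtain ⟨m, rfl⟩ := Nat.exists_eq_succ_of_ne_zero hL
      exact sum_chainW hQ1 _ _
    rw [this, mul_one]

lemma sum_ite_ne {α : Type*} [Fintype α] [DecidableEq α] (x₀ : α) (f : α → ℝ) :
    ∑ v, (if v = x₀ then 0 else f v) = (∑ v, f v) - f x₀ := by
  have h : ∑ v, (if v = x₀ then (0:ℝ) else f v) = ∑ v ∈ Finset.univ.erase x₀, f v := by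
    rw [← Finset.add_sum_erase Finset.univ (fun v => if v = x₀ then (0:ℝ) else f v)
      (Finset.mem_univ x₀)]
    rw [if_pos rfl, zero_add]
    exact Finset.sum_congr rfl fun v hv => if_neg (Finset.ne_of_mem_erase hv)
  rw [h, ← Finset.add_sum_erase Finset.univ f (Finset.mem_univ x₀)]
  ring

lemma forall_snoc_ne {α : Type*} {ℓ : ℕ} (x₀ : α) (b : Fin ℓ → α) (v : α) :
    (∀ i : Fin (ℓ+1), (Fin.snoc b v : Fin (ℓ+1) → α) i ≠ x₀)
      ↔ ((∀ i, b i ≠ x₀) ∧ v ≠ x₀) := by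
  constructor
  · intro h
    refine ⟨fun i => ?_, ?_⟩
    · have := h i.castSucc; rwa [Fin.snoc_castSucc] at this
    · have := h (Fin.last ℓ); rwa [Fin.snoc_last] at this
  · rintro ⟨h1, h2⟩ i
    refine Fin.lastCases ?_ (fun i' => ?_) i
    · rwa [Fin.snoc_last]
    · rw [Fin.snoc_castSucc]; exact h1 i'

lemma sum_filter_snoc {α : Type*} [Fintype α] [DecidableEq α] (x₀ : α) (ℓ : ℕ)
    (F : (Fin (ℓ+1) → α) → ℝ) :
    ∑ g ∈ Finset.univ.filter (fun g : Fin (ℓ+1) → α => ∀ i, g i ≠ x₀), F g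
      = ∑ b ∈ Finset.univ.filter (fun b : Fin ℓ → α => ∀ i, b i ≠ x₀),
          ∑ v : α, (if v = x₀ then 0 else F (Fin.snoc b v)) := by
  rw [Finset.sum_filter, Finset.sum_filter]
  rw [← (Fin.snocEquiv (fun _ : Fin (ℓ+1) => α)).sum_comp, Fintype.sum_prod_type,
    Finset.sum_comm]
  apply Finset.sum_congr rfl
  intro b _
  by_cases hb : ∀ i, b i ≠ x₀
  · rw [if_pos hb]
    apply Finset.sum_congr rfl
    intro v _
    have he : (Fin.snocEquiv (fun _ : Fin (ℓ+1) => α)) (v, b) = Fin.snoc b v := rfl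
    rw [he]
    by_cases hv : v = x₀
    · rw [if_pos hv, if_neg (by rw [forall_snoc_ne]; tauto)]
    · rw [if_neg hv, if_pos (by rw [forall_snoc_ne]; exact ⟨hb, hv⟩)]
  · rw [if_neg hb]
    apply Finset.sum_eq_zero
    intro v _
    have he : (Fin.snocEquiv (fun _ : Fin (ℓ+1) => α)) (v, b) = Fin.snoc b v := rfl
    rw [he, if_neg (by rw [forall_snoc_ne]; tauto)]

end Stmt7

open Stmt7

/-- Exponential decay `ℙ⁻(Σ_ℓ^W) ≤ λ₀^ℓ` with `λ₀ = 1 - min(ρ, ℙ⁻(W))`,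
where `ρ = inf_j q_{jξ₀} q_{ξ₀ξ₁} ⋯ q_{ξ_{N-2}ξ_{N-1}}`. -/
theorem stmt7 {k : ℕ} (Q : Matrix (Fin k) (Fin k) ℝ)
    (hQ0 : ∀ i j, 0 ≤ Q i j) (hQ1 : ∀ i, ∑ j, Q i j = 1)
    (p : Fin k → ℝ) (hp : ∀ i, 0 < p i) (hpsum : ∑ i, p i = 1)
    (hstat : ∀ j, ∑ i, p i * Q i j = p j)
    (ℙinv : Measure (ℕ → Fin k)) [IsProbabilityMeasure ℙinv]
    (hμ : ∀ w : List (Fin k), ℙinv (cylL w) = ENNReal.ofReal (cylW p Q w))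
    (ξ₀ : Fin k) (ξt : List (Fin k))
    (hWpos : 0 < ℙinv (cylL (ξ₀ :: ξt)))
    (ρ : ℝ) (hρ : ρ = ⨅ j : Fin k, Q j ξ₀ * chainW Q ξ₀ ξt) (hρpos : 0 < ρ)
    (ρ₀ : ℝ) (hρ₀ : ρ₀ = min ρ (ℙinv (cylL (ξ₀ :: ξt))).toReal)
    (N : ℕ) (hNdef : N = (ξ₀ :: ξt).length) :
    ∀ ℓ : ℕ, 1 ≤ ℓ →
      ℙinv {ω | ∀ i < ℓ, shift^[i * N] ω ∉ cylL (ξ₀ :: ξt)} ≤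
        ENNReal.ofReal ((1 - ρ₀) ^ ℓ) := by
  intro ℓ _
  subst hNdef
  have hLne : (ξ₀ :: ξt).length ≠ 0 := by simp
  have hofget : List.ofFn (ξ₀ :: ξt).get = ξ₀ :: ξt := List.ofFn_get _
  have hchainρ : ∀ c : Fin k, ρ ≤ chainW Q c (ξ₀ :: ξt) := by
    intro c
    have hc : chainW Q c (ξ₀ :: ξt) = Q c ξ₀ * chainW Q ξ₀ ξt := rfl
    rw [hc, hρ]
    exact ciInf_le (Set.Finite.bddBelow (Set.finite_range _)) c
  have hWeq : (ℙinv (cylL (ξ₀ :: ξt))).toReal = cylW p Q (ξ₀ :: ξt) := by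
    rw [hμ, ENNReal.toReal_ofReal (cylW_nonneg hQ0 hp _)]
  have hρ₀ρ : ρ₀ ≤ ρ := hρ₀ ▸ min_le_left _ _
  have hρ₀W : ρ₀ ≤ cylW p Q (ξ₀ :: ξt) := hWeq ▸ (hρ₀ ▸ min_le_right _ _)
  have hW1 : (ℙinv (cylL (ξ₀ :: ξt))).toReal ≤ 1 := by
    rw [← ENNReal.toReal_one]
    exact ENNReal.toReal_mono ENNReal.one_ne_top prob_le_one
  have hlam : 0 ≤ 1 - ρ₀ := by
    have h1 : ρ₀ ≤ 1 := le_trans (hρ₀ ▸ min_le_right _ _) hW1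
    linarith
  -- measurability of cylinders
  have hmeas : ∀ w : List (Fin k), MeasurableSet (cylL w) := by
    intro w
    have hrw : cylL w = ⋂ i : Fin w.length, (fun ω : ℕ → Fin k => ω i) ⁻¹' {w.get i} := by
      ext ω
      simp only [Set.mem_iInter, Set.mem_preimage, Set.mem_singleton_iff]
      exact mem_cylL
    rw [hrw]
    exact MeasurableSet.iInter fun i =>
      (measurable_pi_apply ((i : ℕ))) (measurableSet_singleton _)
  -- decomposition of the avoidance set into cylinders
  have hA : ∀ m : ℕ,
      {ω : ℕ → Fin k | ∀ i < m, shift^[i * (ξ₀ :: ξt).length] ω ∉ cylL (ξ₀ :: ξt)}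
      = ⋃ b ∈ Finset.univ.filter
          (fun b : Fin m → Fin (ξ₀ :: ξt).length → Fin k => ∀ i, b i ≠ (ξ₀ :: ξt).get),
          cylL (word (ξ₀ :: ξt).length b) := by
    intro m
    ext ω
    simp only [Set.mem_setOf_eq, Set.mem_iUnion, Finset.mem_filter, Finset.mem_univ, true_and,
      exists_prop]
    constructor
    · intro h
      refine ⟨fun i j => ω (i * (ξ₀ :: ξt).length + j), fun i hbad => h i i.2 ?_, ?_⟩
      · rw [mem_cylL]
        intro j
        rw [shift_iter]
        have h3 : (j : ℕ) + (i : ℕ) * (ξ₀ :: ξt).length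
            = (i : ℕ) * (ξ₀ :: ξt).length + (j : ℕ) := by ring
        rw [h3]
        exact congrFun hbad j
      · rw [mem_cylL_word]
        intro i j; rfl
    · rintro ⟨b, hb, hω⟩ i hi hmem
      rw [mem_cylL_word] at hω
      apply hb ⟨i, hi⟩
      funext j
      rw [mem_cylL] at hmem
      have h2 := hmem j
      rw [shift_iter] at h2
      rw [← hω ⟨i, hi⟩ j, ← h2]
      congr 1
      show (i : ℕ) * (ξ₀ :: ξt).length + (j : ℕ) = (j : ℕ) + i * (ξ₀ :: ξt).length
      ring
  -- measure of the avoidance set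
  have hmeasA : ∀ m : ℕ,
      ℙinv {ω : ℕ → Fin k | ∀ i < m, shift^[i * (ξ₀ :: ξt).length] ω ∉ cylL (ξ₀ :: ξt)}
      = ENNReal.ofReal (∑ b ∈ Finset.univ.filter
          (fun b : Fin m → Fin (ξ₀ :: ξt).length → Fin k => ∀ i, b i ≠ (ξ₀ :: ξt).get),
          cylW p Q (word (ξ₀ :: ξt).length b)) := by
    intro m
    rw [hA m, measure_biUnion_finset ?_ (fun b _ => hmeas _)]
    · rw [ENNReal.ofReal_sum_of_nonneg (fun b _ => cylW_nonneg hQ0 hp _)]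
      exact Finset.sum_congr rfl fun b _ => hμ _
    · intro b hb b' hb' hne
      simp only [Function.onFun]
      refine Set.disjoint_left.mpr fun ω h1 h2 => hne ?_
      rw [mem_cylL_word] at h1 h2
      funext i j
      rw [← h1 i j, h2 i j]
  -- the inductive step for the real sums
  have hstep : ∀ m : ℕ,
      (∑ b ∈ Finset.univ.filter
        (fun b : Fin (m+1) → Fin (ξ₀ :: ξt).length → Fin k => ∀ i, b i ≠ (ξ₀ :: ξt).get),
        cylW p Q (word (ξ₀ :: ξt).length b))
      ≤ (1 - ρ₀) * ∑ b ∈ Finset.univ.filter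
        (fun b : Fin m → Fin (ξ₀ :: ξt).length → Fin k => ∀ i, b i ≠ (ξ₀ :: ξt).get),
        cylW p Q (word (ξ₀ :: ξt).length b) := by
    intro m
    rw [sum_filter_snoc, Finset.mul_sum]
    apply Finset.sum_le_sum
    intro b _
    have hkey : ρ₀ * cylW p Q (word (ξ₀ :: ξt).length b)
        ≤ cylW p Q (word (ξ₀ :: ξt).length b ++ (ξ₀ :: ξt)) := by
      rcases eq_or_ne (word (ξ₀ :: ξt).length b) [] with hu | hu
      · rw [hu]
        simpa [cylW] using hρ₀W
      · rw [cylW_append hu, mul_comm]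
        exact mul_le_mul_of_nonneg_left (le_trans hρ₀ρ (hchainρ _)) (cylW_nonneg hQ0 hp _)
    calc ∑ v : Fin (ξ₀ :: ξt).length → Fin k,
          (if v = (ξ₀ :: ξt).get then 0
            else cylW p Q (word (ξ₀ :: ξt).length (Fin.snoc b v)))
        = (∑ v : Fin (ξ₀ :: ξt).length → Fin k,
            cylW p Q (word (ξ₀ :: ξt).length b ++ List.ofFn v))
            - cylW p Q (word (ξ₀ :: ξt).length b ++ List.ofFn (ξ₀ :: ξt).get) := by
          simp only [word_snoc]
          rw [sum_ite_ne]
      _ = cylW p Q (word (ξ₀ :: ξt).length b)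
            - cylW p Q (word (ξ₀ :: ξt).length b ++ (ξ₀ :: ξt)) := by
          rw [sum_cylW_append hQ1 hpsum hLne, hofget]
      _ ≤ (1 - ρ₀) * cylW p Q (word (ξ₀ :: ξt).length b) := by
          rw [sub_mul, one_mul]
          linarith [hkey]
  -- the full real bound by induction
  have hS : ∀ m : ℕ,
      (∑ b ∈ Finset.univ.filter
        (fun b : Fin m → Fin (ξ₀ :: ξt).length → Fin k => ∀ i, b i ≠ (ξ₀ :: ξt).get),
        cylW p Q (word (ξ₀ :: ξt).length b)) ≤ (1 - ρ₀) ^ m := by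
    intro m
    induction m with
    | zero =>
      refine le_trans (Finset.sum_le_sum_of_subset_of_nonneg (Finset.filter_subset _ _)
        (fun b _ _ => cylW_nonneg hQ0 hp _)) ?_
      simp [word_zero, cylW]
    | succ m ih =>
      refine le_trans (hstep m) ?_
      rw [pow_succ]
      calc (1 - ρ₀) * ∑ b ∈ Finset.univ.filter
            (fun b : Fin m → Fin (ξ₀ :: ξt).length → Fin k => ∀ i, b i ≠ (ξ₀ :: ξt).get),
            cylW p Q (word (ξ₀ :: ξt).length b)
          ≤ (1 - ρ₀) * (1 - ρ₀) ^ m := mul_le_mul_of_nonneg_left ih hlam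
        _ = (1 - ρ₀) ^ m * (1 - ρ₀) := mul_comm _ _
  rw [hmeasA ℓ]
  exact ENNReal.ofReal_le_ofReal (hS ℓ)
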